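/- Define L : ℂ → Matrix (Fin 2) (Fin 2) ℂ by L z = ![![1/z, 1/z], ![0, 1/(2(1+z))]]. Then (fun z => (z−1) • (1 − L z)⁻¹) tends to the matrix ![![1, 4/3], ![0, 0]] along the punctured neighborhood filter 𝓝[≠] 1. -/

import Mathlib

open Filter

theorem residue_matrix_example_two_types :
    Tendsto
      (fun z : ℂ => (z - 1) •
        ((1 : Matrix (Fin 2) (Fin 2) ℂ) -
          !![1/z, 1/z; 0, 1/(2*(1+z))])⁻¹)
      (nhdsWithin 1 {(1 : ℂ)}ᶜ)
      (nhds !![(1 : ℂ), 4/3; 0, 0]) := by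
  have key : Tendsto
      (fun z : ℂ => !![z, 2*(1+z)/(2*z+1); 0, 2*(1+z)*(z-1)/(2*z+1)])
      (nhdsWithin 1 {(1 : ℂ)}ᶜ)
      (nhds !![(1 : ℂ), 4/3; 0, 0]) := by
    have h1 : ContinuousAt
        (fun z : ℂ => !![z, 2*(1+z)/(2*z+1); 0, 2*(1+z)*(z-1)/(2*z+1)]) 1 := by
      refine continuousAt_pi.2 fun i => continuousAt_pi.2 fun j => ?_
      fin_cases i <;> fin_cases j <;> simp <;>
        fun_prop (disch := norm_num)
    have := h1.continuousWithinAt (s := {(1 : ℂ)}ᶜ)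
    unfold ContinuousWithinAt at this
    convert this using 2
    norm_num [Matrix.smul_of]
  refine Tendsto.congr' ?_ key
  have h0 : ∀ᶠ z : ℂ in nhdsWithin 1 {(1 : ℂ)}ᶜ,
      z ≠ 0 ∧ z ≠ -1 ∧ 2*z+1 ≠ 0 ∧ z ≠ 1 := by
      have hmem : {z : ℂ | z ≠ 0 ∧ z ≠ -1 ∧ 2*z+1 ≠ 0} ∈ nhds (1 : ℂ) := by
        have : IsOpen {z : ℂ | z ≠ 0 ∧ z ≠ -1 ∧ 2*z+1 ≠ 0} := by
          apply IsOpen.inter (isOpen_ne)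
          exact IsOpen.inter (isOpen_ne) (isOpen_compl_iff.mpr (isClosed_eq (by fun_prop) continuous_const))
        exact this.mem_nhds (by norm_num)
      filter_upwards [nhdsWithin_le_nhds hmem, self_mem_nhdsWithin] with z hz hz1
      exact ⟨hz.1, hz.2.1, hz.2.2, hz1⟩
  filter_upwards [h0] with z hz
  obtain ⟨hz0, hzm1, hz2, hz1⟩ := hz
  have hz1' : z - 1 ≠ 0 := sub_ne_zero.mpr hz1
  have hzm1' : 1 + z ≠ 0 := by intro h; apply hzm1; linear_combination h
  have hA : (-2 - z*4 + z^2*2 + z^3*4 : ℂ) ≠ 0 := by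
    have h := mul_ne_zero (mul_ne_zero hz1' hzm1') hz2
    intro h'; apply h; linear_combination h'/2
  have hB : (-z - z^2 + z^3*2 : ℂ) ≠ 0 := by
    have h := mul_ne_zero (mul_ne_zero hz0 hz1') hz2
    intro h'; apply h; linear_combination h'
  have h2z : (2:ℂ)*(1+z) ≠ 0 := mul_ne_zero two_ne_zero hzm1'
  have hE : (1:ℂ) - z⁻¹ = (z-1)/z := by field_simp
  have hF : (1:ℂ) - (1+z)⁻¹*2⁻¹ = (2*z+1)/(2*(1+z)) := by field_simp; ring
  ext i j
  rw [Matrix.inv_def, Ring.inverse_eq_inv']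
  fin_cases i <;> fin_cases j <;>
    simp [Matrix.adjugate_fin_two, Matrix.det_fin_two, Matrix.smul_apply]
  all_goals rw [hE, hF, inv_div, inv_div]
  all_goals field_simp
  all_goals ring
  linear_combination -(inv_mul_cancel₀ (show (1 + z*2 : ℂ) ≠ 0 by rw [add_comm, mul_comm]; exact hz2))
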